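/- (Weight-difference bound, key step in Lemma 3.2(i)) Let C > 0 satisfy ‖∇f(y^k) + β(x^{k+1} − y^k)‖_∞ < C for all k, let K, I* be as in the stable-support property (for k > K the support of x^k equals I*), and set C̄ = p(1−p)(pλ/C)^{(p−2)/(1−p)} and δ^k_i = √(ε^k_i). Then for all sufficiently large k, Σ_{i∈I*} |w_i^k − w_i^{k−1}| ≤ C̄ ( Σ_{i∈I*} |x_i^k − x_i^{k−1}| + 2 max_i δ_i^0 · (Σ_{i∈I*} δ_i^{k−1} − Σ_{i∈I*} δ_i^k) ). -/

import Mathlib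

open Filter
open scoped BigOperators InnerProductSpace

noncomputable section

/-- Real n-dimensional Euclidean space. -/
abbrev Vec (n : ℕ) := EuclideanSpace ℝ (Fin n)

/-- The smoothed objective `F(x, ε) = f(x) + λ ∑ᵢ (|xᵢ| + εᵢ)^p`. -/
def Fobj (n : ℕ) (p lam : ℝ) (f : Vec n → ℝ) (z : Vec n) (ε : Fin n → ℝ) : ℝ :=
  f z + lam * ∑ i, (|z i| + ε i) ^ p

/-- The merit function `ψ(x, y, ε) = F(x, ε) + (β/2)‖x − y‖²`. -/
def psiObj (n : ℕ) (p lam β : ℝ) (f : Vec n → ℝ) (z y : Vec n) (ε : Fin n → ℝ) : ℝ :=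
  Fobj n p lam f z ε + β / 2 * ‖z - y‖ ^ 2

/-- The weighted-ℓ₁ subproblem objective at iteration `k`:
`⟨∇f(yₖ), z⟩ + (β/2)‖z − yₖ‖² + λ ∑ᵢ wᵢᵏ |zᵢ|` with `wᵢᵏ = p(|xᵢᵏ| + εᵢᵏ)^{p−1}`. -/
def subObj (n : ℕ) (p lam β : ℝ) (f : Vec n → ℝ) (xk yk : Vec n) (εk : Fin n → ℝ)
    (z : Vec n) : ℝ :=
  ⟪gradient f yk, z⟫_ℝ + β / 2 * ‖z - yk‖ ^ 2
    + lam * ∑ i, (p * (|xk i| + εk i) ^ (p - 1)) * |z i|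

/-- All the hypotheses of the EIRL1 algorithm (Algorithm 1) together with
Assumption 2.1.  The convention `x⁻¹ = x⁰` is encoded through truncated
subtraction on ℕ (`x (k-1) = x 0` for `k = 0`). -/
structure EIRL1 (n : ℕ) (p lam β Lf μ αbar : ℝ) (f : Vec n → ℝ)
    (x y : ℕ → Vec n) (ε : ℕ → Fin n → ℝ) (α : ℕ → ℝ) : Prop where
  hn : 1 ≤ n
  hp0 : 0 < p
  hp1 : p < 1
  hlam : 0 < lam
  hμ0 : 0 < μ
  hμ1 : μ < 1
  hLf : 0 ≤ Lf
  hβ : Lf < β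
  hconv : ConvexOn ℝ Set.univ f
  hdiff : ContDiff ℝ 1 f
  hlip : ∀ a b, ‖gradient f a - gradient f b‖ ≤ Lf * ‖a - b‖
  hαbar0 : 0 ≤ αbar
  hαbar1 : αbar < 1
  hα0 : ∀ k, 0 ≤ α k
  hα1 : ∀ k, α k ≤ αbar
  hε0 : ∀ i, 0 < ε 0 i
  hεpos : ∀ k i, 0 < ε (k + 1) i
  hεdec : ∀ k i, ε (k + 1) i ≤ μ * ε k i
  hy : ∀ k, y k = x k + α k • (x k - x (k - 1))
  hmin : ∀ k z, z ≠ x (k + 1) →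
    subObj n p lam β f (x k) (y k) (ε k) (x (k + 1)) < subObj n p lam β f (x k) (y k) (ε k) z
  hlevel : Bornology.IsBounded {z : Vec n | Fobj n p lam f z 0 ≤ Fobj n p lam f (x 0) (ε 0)}

lemma subObj_perturb {n : ℕ} (p lam β : ℝ) (f : Vec n → ℝ) (xk yk : Vec n) (εk : Fin n → ℝ)
    (z : Vec n) (i : Fin n) (t s : ℝ) (hs : |z i + t| = |z i| + s * t) :
    subObj n p lam β f xk yk εk (z + t • EuclideanSpace.single i 1)
      = subObj n p lam β f xk yk εk z
        + t * (gradient f yk i + β * (z i - yk i)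
            + lam * (p * (|xk i| + εk i) ^ (p - 1)) * s)
        + β / 2 * t ^ 2 := by
  have happ : ∀ j, (z + t • EuclideanSpace.single i (1:ℝ)) j
      = z j + (if j = i then t else 0) := by
    intro j
    simp [EuclideanSpace.single_apply, mul_ite]
  have h1 : ⟪gradient f yk, z + t • EuclideanSpace.single i (1:ℝ)⟫_ℝ
      = ⟪gradient f yk, z⟫_ℝ + t * gradient f yk i := by
    rw [inner_add_right, real_inner_smul_right, EuclideanSpace.inner_single_right]
    simp [mul_comm]
  have h2 : ‖z + t • EuclideanSpace.single i (1:ℝ) - yk‖ ^ 2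
      = ‖z - yk‖ ^ 2 + 2 * (t * (z i - yk i)) + t ^ 2 := by
    have : z + t • EuclideanSpace.single i (1:ℝ) - yk
        = (z - yk) + t • EuclideanSpace.single i (1:ℝ) := by abel
    rw [this, norm_add_sq_real, real_inner_smul_right, EuclideanSpace.inner_single_right,
      norm_smul, EuclideanSpace.norm_single]
    have : (z - yk) i = z i - yk i := by simp
    rw [this]
    simp [Real.norm_eq_abs, sq_abs]
  have h3 : (∑ j, (p * (|xk j| + εk j) ^ (p - 1)) * |(z + t • EuclideanSpace.single i (1:ℝ)) j|)
      = (∑ j, (p * (|xk j| + εk j) ^ (p - 1)) * |z j|)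
        + (p * (|xk i| + εk i) ^ (p - 1)) * (s * t) := by
    have := Finset.sum_sub_distrib (s := (Finset.univ : Finset (Fin n)))
      (f := fun j => (p * (|xk j| + εk j) ^ (p - 1)) * |(z + t • EuclideanSpace.single i (1:ℝ)) j|)
      (g := fun j => (p * (|xk j| + εk j) ^ (p - 1)) * |z j|)
    have key : ∑ j, ((p * (|xk j| + εk j) ^ (p - 1)) * |(z + t • EuclideanSpace.single i (1:ℝ)) j|
        - (p * (|xk j| + εk j) ^ (p - 1)) * |z j|)
        = (p * (|xk i| + εk i) ^ (p - 1)) * (s * t) := by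
      rw [Finset.sum_eq_single i]
      · rw [happ i, if_pos rfl, hs]; ring
      · intro j _ hj
        rw [happ j]; simp [hj]
      · simp
    linarith [this, key]
  unfold subObj
  rw [h1, h2, h3]
  ring

lemma stationarity {n : ℕ} {p lam β : ℝ} {f : Vec n → ℝ} {xk yk z : Vec n} {εk : Fin n → ℝ}
    (i' : Fin n)
    (hβ : 0 < β) (hlam : 0 < lam) (hw : 0 ≤ p * (|xk i'| + εk i') ^ (p - 1))
    (hmin : ∀ v : Vec n, v ≠ z → subObj n p lam β f xk yk εk z < subObj n p lam β f xk yk εk v)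
    (hz : z i' ≠ 0) :
    lam * (p * (|xk i'| + εk i') ^ (p - 1))
      = |gradient f yk i' + β * (z i' - yk i')| := by
  set i := i'
  set w : ℝ := p * (|xk i| + εk i) ^ (p - 1) with hwdef
  set s : ℝ := if 0 < z i then 1 else -1 with hsdef
  have hzabs : 0 < |z i| := abs_pos.mpr hz
  set A : ℝ := gradient f yk i + β * (z i - yk i) + lam * w * s with hAdef
  have key : ∀ t : ℝ, t ≠ 0 → |t| < |z i| → 0 < t * A + β / 2 * t ^ 2 := by
    intro t ht htz
    have hs : |z i + t| = |z i| + s * t := by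
      rcases lt_trichotomy (z i) 0 with h | h | h
      · have habs : |z i| = -(z i) := abs_of_neg h
        have : z i + t < 0 := by
          rcases abs_lt.mp htz with ⟨h1, h2⟩
          rw [habs] at h2; linarith
        rw [abs_of_neg this, hsdef, if_neg (by linarith)]
        rw [habs]; ring
      · exact absurd h hz
      · have habs : |z i| = z i := abs_of_pos h
        have : 0 < z i + t := by
          rcases abs_lt.mp htz with ⟨h1, h2⟩
          rw [habs] at h1; linarith
        rw [abs_of_pos this, hsdef, if_pos h, habs]; ring
    have hne : z + t • EuclideanSpace.single i (1:ℝ) ≠ z := by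
      intro hcontra
      apply ht
      have := congrFun (congrArg (fun v : Vec n => (v : Fin n → ℝ)) hcontra) i
      simpa [EuclideanSpace.single_apply] using this
    have := hmin _ hne
    rw [subObj_perturb p lam β f xk yk εk z i t s hs] at this
    rw [← hwdef] at this
    rw [hAdef]
    linarith
  have hA : A = 0 := by
    by_contra hA0
    have hAabs : 0 < |A| := abs_pos.mpr hA0
    set δ : ℝ := min (1 / β) (|z i| / (2 * |A|)) with hδdef
    have hδpos : 0 < δ := lt_min (by positivity) (by positivity)
    have ht1 : |(-A) * δ| < |z i| := by
      rw [abs_mul, abs_neg, abs_of_pos hδpos]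
      calc |A| * δ ≤ |A| * (|z i| / (2 * |A|)) :=
            mul_le_mul_of_nonneg_left (min_le_right _ _) hAabs.le
        _ = |z i| / 2 := by field_simp
        _ < |z i| := by linarith
    have ht0 : (-A) * δ ≠ 0 := by
      apply mul_ne_zero (by simpa using hA0) (ne_of_gt hδpos)
    have := key ((-A) * δ) ht0 ht1
    have hβδ : β * δ ≤ 1 := by
      have : δ ≤ 1 / β := min_le_left _ _
      calc β * δ ≤ β * (1 / β) := mul_le_mul_of_nonneg_left this hβ.le
        _ = 1 := by field_simp
    have hexp : (-A) * δ * A + β / 2 * ((-A) * δ)^2 = A^2 * δ * (β * δ / 2 - 1) := by ring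
    rw [hexp] at this
    have hApos : 0 < A^2 * δ := by positivity
    nlinarith
  have : gradient f yk i + β * (z i - yk i) = -(lam * w * s) := by
    rw [hAdef] at hA; linarith
  rw [this, abs_neg, abs_mul]
  have hsabs : |s| = 1 := by
    rw [hsdef]; split <;> simp
  rw [hsabs, mul_one, abs_of_nonneg (by positivity : (0:ℝ) ≤ lam * w)]

lemma rpow_lip {p r a b : ℝ} (hp1 : p < 1) (hr : 0 < r)
    (ha : r ≤ a) (hb : r ≤ b) :
    |a ^ (p-1) - b ^ (p-1)| ≤ (1 - p) * r ^ (p - 2) * |a - b| := by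
  have hderiv : ∀ t ∈ Set.Ici r, HasDerivWithinAt (fun u : ℝ => u ^ (p-1))
      ((p-1) * t ^ (p-2)) (Set.Ici r) t := by
    intro t ht
    have htpos : 0 < t := lt_of_lt_of_le hr ht
    have h := (Real.hasDerivAt_rpow_const (x := t) (p := p-1)
      (Or.inl htpos.ne')).hasDerivWithinAt (s := Set.Ici r)
    have : p - 1 - 1 = p - 2 := by ring
    rwa [this] at h
  have hbound : ∀ t ∈ Set.Ici r, ‖(p-1) * t ^ (p-2)‖ ≤ (1-p) * r ^ (p-2) := by
    intro t ht
    have htpos : 0 < t := lt_of_lt_of_le hr ht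
    rw [Real.norm_eq_abs, abs_mul, abs_of_neg (by linarith : p - 1 < 0),
      abs_of_pos (Real.rpow_pos_of_pos htpos _)]
    have h1 : t ^ (p-2) ≤ r ^ (p-2) := Real.rpow_le_rpow_of_nonpos hr ht (by linarith)
    nlinarith
  have := Convex.norm_image_sub_le_of_norm_hasDerivWithin_le hderiv hbound (convex_Ici r) hb ha
  simpa [Real.norm_eq_abs] using this

/-- Weight-difference bound (key step in Lemma 3.2(i)):
`∑_{i∈I*} |wᵢᵏ − wᵢᵏ⁻¹| ≤ C̄ (∑_{i∈I*} |xᵢᵏ − xᵢᵏ⁻¹| + 2 maxᵢ δᵢ⁰ (∑_{i∈I*} δᵢᵏ⁻¹ − ∑_{i∈I*} δᵢᵏ))`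
for all sufficiently large `k`, where `δᵢᵏ = √εᵢᵏ` and
`C̄ = p(1−p)(pλ/C)^{(p−2)/(1−p)}`. -/
theorem stmt_13 (n : ℕ) (p lam β Lf μ αbar : ℝ) (f : Vec n → ℝ)
    (x y : ℕ → Vec n) (ε : ℕ → Fin n → ℝ) (α : ℕ → ℝ)
    (H : EIRL1 n p lam β Lf μ αbar f x y ε α)
    (C : ℝ) (hC0 : 0 < C)
    (hC : ∀ k, ∀ i, |gradient f (y k) i + β * (x (k + 1) i - y k i)| < C)
    (K : ℕ) (Istar : Finset (Fin n))
    (hsupp : ∀ k > K, ∀ i, i ∈ Istar ↔ x k i ≠ 0) :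
    ∃ N : ℕ, ∀ k ≥ N,
      ∑ i ∈ Istar,
          |p * (|x k i| + ε k i) ^ (p - 1) - p * (|x (k - 1) i| + ε (k - 1) i) ^ (p - 1)|
        ≤ p * (1 - p) * (p * lam / C) ^ ((p - 2) / (1 - p)) *
            (∑ i ∈ Istar, |x k i - x (k - 1) i|
              + 2 * (⨆ i : Fin n, Real.sqrt (ε 0 i)) *
                  (∑ i ∈ Istar, Real.sqrt (ε (k - 1) i) - ∑ i ∈ Istar, Real.sqrt (ε k i))) := by
  have hp0 := H.hp0
  have hp1 := H.hp1
  have hlam := H.hlam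
  have hβ0 : 0 < β := lt_of_le_of_lt H.hLf H.hβ
  have h1p : 0 < 1 - p := by linarith
  have hεposall : ∀ k i, 0 < ε k i := by
    intro k i
    cases k with
    | zero => exact H.hε0 i
    | succ m => exact H.hεpos m i
  have hεle : ∀ k i, ε (k+1) i ≤ ε k i := by
    intro k i
    have h1 := H.hεdec k i
    nlinarith [hεposall k i, H.hμ1]
  have hε0le : ∀ k i, ε k i ≤ ε 0 i := by
    intro k i
    induction k with
    | zero => exact le_refl _
    | succ m ih => exact le_trans (hεle m i) ih
  have hbasepos : ∀ k i, 0 < |x k i| + ε k i :=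
    fun k i => add_pos_of_nonneg_of_pos (abs_nonneg _) (hεposall k i)
  have hwpos : ∀ k i, 0 < p * (|x k i| + ε k i) ^ (p-1) :=
    fun k i => mul_pos hp0 (Real.rpow_pos_of_pos (hbasepos k i) _)
  set r : ℝ := (p * lam / C) ^ ((1:ℝ)/(1-p)) with hrdef
  have hplamC : 0 < p * lam / C := by positivity
  have hrpos : 0 < r := Real.rpow_pos_of_pos hplamC _
  have hrp1 : r ^ (p-1) = C / (p * lam) := by
    rw [hrdef, ← Real.rpow_mul hplamC.le]
    have he : (1:ℝ)/(1-p) * (p-1) = -1 := by field_simp; ring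
    rw [he, Real.rpow_neg_one, inv_div]
  have hrp2 : r ^ (p-2) = (p*lam/C) ^ ((p-2)/(1-p)) := by
    rw [hrdef, ← Real.rpow_mul hplamC.le]
    congr 1
    field_simp
  -- lower bound on the smoothing bases over the support
  have hlow : ∀ k, K ≤ k → ∀ i ∈ Istar, r ≤ |x k i| + ε k i := by
    intro k hk i hi
    have hxne : x (k+1) i ≠ 0 := (hsupp (k+1) (by omega) i).mp hi
    have hst := stationarity (n := n) (p := p) (lam := lam) (β := β) (f := f)
      (xk := x k) (yk := y k) (z := x (k+1)) (εk := ε k) i hβ0 hlam (hwpos k i).le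
      (fun v hv => H.hmin k v hv) hxne
    have hCk := hC k i
    have h2 : lam * (p * (|x k i| + ε k i) ^ (p-1)) < C := by rw [hst]; exact hCk
    have h3 : (|x k i| + ε k i) ^ (p-1) < r ^ (p-1) := by
      rw [hrp1, lt_div_iff₀ (by positivity : (0:ℝ) < p * lam)]
      nlinarith
    by_contra hle
    push_neg at hle
    have := Real.rpow_le_rpow_of_nonpos (hbasepos k i) hle.le (by linarith : p - 1 ≤ 0)
    linarith
  set M : ℝ := ⨆ i : Fin n, Real.sqrt (ε 0 i) with hMdef
  have hM : ∀ (k : ℕ) (j : Fin n), Real.sqrt (ε k j) ≤ M := by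
    intro k j
    exact le_trans (Real.sqrt_le_sqrt (hε0le k j))
      (le_ciSup (f := fun j : Fin n => Real.sqrt (ε 0 j))
        (Set.Finite.bddAbove (Set.finite_range _)) j)
  have hM0 : 0 ≤ M := by
    have : Nonempty (Fin n) := ⟨⟨0, H.hn⟩⟩
    exact le_trans (Real.sqrt_nonneg _) (hM 0 (Classical.arbitrary _))
  refine ⟨K + 1, ?_⟩
  intro k hk
  obtain ⟨m, rfl⟩ : ∃ m, k = m + 1 := ⟨k - 1, by omega⟩
  have hmK : K ≤ m := by omega
  simp only [Nat.add_sub_cancel]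
  set Cb : ℝ := p * (1 - p) * r ^ (p - 2) with hCbdef
  have hCb0 : 0 ≤ Cb := by positivity
  have hper : ∀ i ∈ Istar,
      |p * (|x (m+1) i| + ε (m+1) i) ^ (p-1) - p * (|x m i| + ε m i) ^ (p-1)|
        ≤ Cb * (|x (m+1) i - x m i|
            + 2 * M * (Real.sqrt (ε m i) - Real.sqrt (ε (m+1) i))) := by
    intro i hi
    set a : ℝ := |x (m+1) i| + ε (m+1) i with hadef
    set b : ℝ := |x m i| + ε m i with hbdef
    have hra : r ≤ a := hlow (m+1) (by omega) i hi
    have hrb : r ≤ b := hlow m hmK i hi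
    have hlip := rpow_lip (p := p) hp1 hrpos hra hrb
    have hδ : Real.sqrt (ε (m+1) i) ≤ Real.sqrt (ε m i) := Real.sqrt_le_sqrt (hεle m i)
    have hεdiff : ε m i - ε (m+1) i
        ≤ 2 * M * (Real.sqrt (ε m i) - Real.sqrt (ε (m+1) i)) := by
      have hsum : Real.sqrt (ε m i) + Real.sqrt (ε (m+1) i) ≤ 2 * M := by
        have := hM m i; have := hM (m+1) i; linarith
      have hdd : 0 ≤ Real.sqrt (ε m i) - Real.sqrt (ε (m+1) i) := by linarith
      nlinarith [mul_nonneg (by linarith : (0:ℝ) ≤ 2*M - (Real.sqrt (ε m i) + Real.sqrt (ε (m+1) i))) hdd,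
        Real.sq_sqrt (hεposall m i).le, Real.sq_sqrt (hεposall (m+1) i).le]
    have hab : |a - b| ≤ |x (m+1) i - x m i|
        + 2 * M * (Real.sqrt (ε m i) - Real.sqrt (ε (m+1) i)) := by
      have h1 : |(|x (m+1) i| - |x m i|)| ≤ |x (m+1) i - x m i| :=
        abs_abs_sub_abs_le_abs_sub _ _
      have h2 : ε (m+1) i ≤ ε m i := hεle m i
      have h3 : a - b = (|x (m+1) i| - |x m i|) + (ε (m+1) i - ε m i) := by
        rw [hadef, hbdef]; ring
      calc |a - b| ≤ |(|x (m+1) i| - |x m i|)| + |ε (m+1) i - ε m i| := by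
            rw [h3]; exact abs_add_le _ _
        _ = |(|x (m+1) i| - |x m i|)| + (ε m i - ε (m+1) i) := by
            rw [show |ε (m+1) i - ε m i| = ε m i - ε (m+1) i from by
              rw [abs_of_nonpos (by linarith : ε (m+1) i - ε m i ≤ 0)]; ring]
        _ ≤ |x (m+1) i - x m i| + 2 * M * (Real.sqrt (ε m i) - Real.sqrt (ε (m+1) i)) := by
            linarith
    calc |p * a ^ (p-1) - p * b ^ (p-1)|
        = p * |a ^ (p-1) - b ^ (p-1)| := by
          rw [← mul_sub, abs_mul, abs_of_pos hp0]
      _ ≤ p * ((1 - p) * r ^ (p - 2) * |a - b|) :=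
          mul_le_mul_of_nonneg_left hlip hp0.le
      _ = Cb * |a - b| := by rw [hCbdef]; ring
      _ ≤ Cb * (|x (m+1) i - x m i|
            + 2 * M * (Real.sqrt (ε m i) - Real.sqrt (ε (m+1) i))) :=
          mul_le_mul_of_nonneg_left hab hCb0
  calc ∑ i ∈ Istar,
        |p * (|x (m+1) i| + ε (m+1) i) ^ (p-1) - p * (|x m i| + ε m i) ^ (p-1)|
      ≤ ∑ i ∈ Istar, Cb * (|x (m+1) i - x m i|
          + 2 * M * (Real.sqrt (ε m i) - Real.sqrt (ε (m+1) i))) :=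
        Finset.sum_le_sum hper
    _ = p * (1 - p) * (p * lam / C) ^ ((p - 2) / (1 - p)) *
          (∑ i ∈ Istar, |x (m+1) i - x m i|
            + 2 * M * (∑ i ∈ Istar, Real.sqrt (ε m i) - ∑ i ∈ Istar, Real.sqrt (ε (m+1) i))) := by
        rw [← Finset.mul_sum, hCbdef, hrp2]
        congr 1
        rw [Finset.sum_add_distrib, ← Finset.mul_sum, Finset.sum_sub_distrib]
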